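/- For every natural number N ≥ 1, (q;q)_N = ∑_{n=1}^{N+1} [N+1 choose n] (-1)^{n-1} n q^{n(n-1)/2}, where [N+1 choose n] is the Gaussian binomial coefficient. -/

import Mathlib

open Finset

/-- q-Pochhammer symbol (a;q)_n = ∏_{k=0}^{n-1} (1 - a q^k). -/
noncomputable def qP (a q : ℂ) (n : ℕ) : ℂ := ∏ k ∈ Finset.range n, (1 - a * q ^ k)

/-- Gaussian (q-)binomial coefficient [N choose n]_q. -/
noncomputable def qBinom (q : ℂ) (N n : ℕ) : ℂ := qP q q N / (qP q q n * qP q q (N - n))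

lemma fac_ne {q : ℂ} (hq : ‖q‖ < 1) (k : ℕ) : (1 : ℂ) - q * q ^ k ≠ 0 := by
  intro h
  have h1 : q * q ^ k = 1 := by linear_combination -h
  have h2 : ‖q * q ^ k‖ < 1 := by
    rw [norm_mul, norm_pow]
    calc ‖q‖ * ‖q‖ ^ k ≤ ‖q‖ * 1 :=
          mul_le_mul_of_nonneg_left (pow_le_one₀ (norm_nonneg q) hq.le) (norm_nonneg q)
      _ = ‖q‖ := mul_one _
      _ < 1 := hq
  rw [h1] at h2
  simp at h2

lemma qP_ne {q : ℂ} (hq : ‖q‖ < 1) (n : ℕ) : qP q q n ≠ 0 := by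
  unfold qP
  exact Finset.prod_ne_zero_iff.mpr fun k _ => fac_ne hq k

lemma qP_succ (q : ℂ) (n : ℕ) : qP q q (n + 1) = qP q q n * (1 - q * q ^ n) :=
  Finset.prod_range_succ _ _

lemma qP_zero (q : ℂ) : qP q q 0 = 1 := by simp [qP]

lemma qBinom_zero {q : ℂ} (hq : ‖q‖ < 1) (M : ℕ) : qBinom q M 0 = 1 := by
  unfold qBinom
  rw [qP_zero, Nat.sub_zero, one_mul, div_self (qP_ne hq M)]

lemma qBinom_self {q : ℂ} (hq : ‖q‖ < 1) (M : ℕ) : qBinom q M M = 1 := by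
  unfold qBinom
  rw [Nat.sub_self, qP_zero, mul_one, div_self (qP_ne hq M)]

lemma qBinom_pascal {q : ℂ} (hq : ‖q‖ < 1) (m j : ℕ) :
    qBinom q (m + 1 + j + 1) (m + 1) =
      q ^ (m + 1) * qBinom q (m + 1 + j) (m + 1) + qBinom q (m + 1 + j) m := by
  unfold qBinom
  have e1 : m + 1 + j + 1 - (m + 1) = j + 1 := by omega
  have e2 : m + 1 + j - (m + 1) = j := by omega
  have e3 : m + 1 + j - m = j + 1 := by omega
  rw [e1, e2, e3]
  rw [show m + 1 + j + 1 = (m + 1 + j) + 1 from rfl, qP_succ q (m + 1 + j),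
      qP_succ q j, qP_succ q m]
  have h1 := qP_ne hq m
  have h2 := qP_ne hq j
  have h3 := qP_ne hq (m + 1 + j)
  have h4 := fac_ne hq m
  have h5 := fac_ne hq j
  field_simp
  ring

lemma telescope (M : ℕ) (t c : ℕ → ℂ) (x : ℂ)
    (h0 : c 0 = t 0)
    (hmid : ∀ n, n < M → c (n + 1) = t (n + 1) - t n)
    (htop : c (M + 1) = -t M) :
    ∑ n ∈ Finset.range (M + 2), c n * x ^ n
      = (1 - x) * ∑ n ∈ Finset.range (M + 1), t n * x ^ n := by
  have hmid' : ∑ n ∈ Finset.range M, c (n + 1) * x ^ (n + 1)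
      = ∑ n ∈ Finset.range M, (t (n + 1) * x ^ (n + 1) - t n * x ^ (n + 1)) :=
    Finset.sum_congr rfl fun n hn => by
      rw [hmid n (Finset.mem_range.mp hn)]; ring
  rw [sub_mul, one_mul, Finset.mul_sum,
      Finset.sum_range_succ' (fun n => c n * x ^ n) (M + 1),
      Finset.sum_range_succ (fun n => c (n + 1) * x ^ (n + 1)) M,
      hmid', Finset.sum_sub_distrib, htop,
      Finset.sum_range_succ' (fun n => t n * x ^ n) M,
      Finset.sum_range_succ (fun n => x * (t n * x ^ n)) M, h0]
  have e1 : ∑ n ∈ Finset.range M, x * (t n * x ^ n)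
      = ∑ n ∈ Finset.range M, t n * x ^ (n + 1) :=
    Finset.sum_congr rfl fun n _ => by ring
  rw [e1]
  ring

lemma qbt {q : ℂ} (hq : ‖q‖ < 1) : ∀ (M : ℕ) (x : ℂ),
    ∏ k ∈ Finset.range M, (1 - x * q ^ k) =
      ∑ n ∈ Finset.range (M + 1),
        qBinom q M n * (-1) ^ n * q ^ n.choose 2 * x ^ n := by
  intro M
  induction M with
  | zero => intro x; simp [qBinom_zero hq]
  | succ M ih =>
    intro x
    have key : ∏ k ∈ Finset.range (M + 1), (1 - x * q ^ k)
        = (1 - x) * ∏ k ∈ Finset.range M, (1 - x * q * q ^ k) := by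
      rw [Finset.prod_range_succ', mul_comm]
      congr 1
      · norm_num
      · exact Finset.prod_congr rfl fun k _ => by ring
    rw [key, ih (x * q)]
    have rearr : ∑ n ∈ Finset.range (M + 1),
          qBinom q M n * (-1) ^ n * q ^ n.choose 2 * (x * q) ^ n
        = ∑ n ∈ Finset.range (M + 1),
          (qBinom q M n * (-1) ^ n * q ^ n.choose 2 * q ^ n) * x ^ n :=
      Finset.sum_congr rfl fun n _ => by rw [mul_pow]; ring
    rw [rearr]
    refine (telescope M (fun n => qBinom q M n * (-1) ^ n * q ^ n.choose 2 * q ^ n)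
      (fun n => qBinom q (M + 1) n * (-1) ^ n * q ^ n.choose 2) x ?_ ?_ ?_).symm
    · simp [qBinom_zero hq]
    · intro n hn
      obtain ⟨j, rfl⟩ : ∃ j, M = n + 1 + j := ⟨M - (n + 1), by omega⟩
      have hch : (n + 1).choose 2 = n + n.choose 2 := by
        rw [Nat.choose_succ_succ, Nat.choose_one_right]
      simp only [hch, qBinom_pascal hq n j]
      ring
    · have hch : (M + 1).choose 2 = M + M.choose 2 := by
        rw [Nat.choose_succ_succ, Nat.choose_one_right]
      simp only [hch, qBinom_self hq]
      ring

lemma polyDerivativeFinsetProd {ι : Type*} [DecidableEq ι] (s : Finset ι) (f : ι → Polynomial ℂ) :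
    Polynomial.derivative (∏ i ∈ s, f i)
      = ∑ i ∈ s, (∏ j ∈ s.erase i, f j) * Polynomial.derivative (f i) := by
  induction s using Finset.induction_on with
  | empty => simp
  | @insert a s ha ih =>
    rw [Finset.prod_insert ha, Polynomial.derivative_mul, ih, Finset.sum_insert ha,
        Finset.erase_insert ha, Finset.mul_sum]
    congr 1
    · ring
    refine Finset.sum_congr rfl fun i hi => ?_
    rw [Finset.erase_insert_of_ne (by rintro rfl; exact ha hi),
        Finset.prod_insert (fun h => ha (Finset.mem_of_mem_erase h))]
    ring

theorem stmt_5 (N : ℕ) (hN : 1 ≤ N) (q : ℂ) (hq : ‖q‖ < 1) :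
    qP q q N =
      ∑ n ∈ Finset.Icc 1 (N + 1),
        qBinom q (N + 1) n * ((-1) ^ (n - 1) * (n : ℂ) * q ^ (n * (n - 1) / 2)) := by
  classical
  have hpoly : (∏ k ∈ Finset.range (N + 1), (1 - Polynomial.C (q ^ k) * Polynomial.X) : Polynomial ℂ)
      = ∑ n ∈ Finset.range (N + 2),
          Polynomial.C (qBinom q (N + 1) n * (-1) ^ n * q ^ n.choose 2) * Polynomial.X ^ n := by
    apply Polynomial.funext
    intro x
    rw [Polynomial.eval_prod, Polynomial.eval_finset_sum]
    simp only [Polynomial.eval_sub, Polynomial.eval_one, Polynomial.eval_mul,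
      Polynomial.eval_C, Polynomial.eval_X, Polynomial.eval_pow]
    have hcomm : ∏ k ∈ Finset.range (N + 1), (1 - q ^ k * x)
        = ∏ k ∈ Finset.range (N + 1), (1 - x * q ^ k) :=
      Finset.prod_congr rfl fun k _ => by ring
    rw [hcomm, qbt hq (N + 1) x]
  have hder := congrArg (fun p : Polynomial ℂ => Polynomial.eval 1 (Polynomial.derivative p)) hpoly
  have hL : Polynomial.eval 1 (Polynomial.derivative
        (∏ k ∈ Finset.range (N + 1), (1 - Polynomial.C (q ^ k) * Polynomial.X))) = -(qP q q N) := by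
    rw [polyDerivativeFinsetProd, Polynomial.eval_finset_sum]
    rw [Finset.sum_eq_single 0]
    · have hset : (Finset.range (N + 1)).erase 0 = Finset.image (· + 1) (Finset.range N) := by
        ext a
        simp only [Finset.mem_erase, Finset.mem_image, Finset.mem_range]
        constructor
        · rintro ⟨ha, hlt⟩; exact ⟨a - 1, by omega, by omega⟩
        · rintro ⟨b, hb, rfl⟩; omega
      rw [Polynomial.eval_mul, Polynomial.eval_prod, hset,
          Finset.prod_image (by intro a _ b _ h; simp only at h; omega)]
      have : ∏ k ∈ Finset.range N, Polynomial.eval 1 (1 - Polynomial.C (q ^ (k + 1)) * Polynomial.X)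
          = qP q q N := by
        unfold qP
        exact Finset.prod_congr rfl fun k _ => by simp; ring
      rw [this]
      simp
    · intro b hb hb0
      rw [Polynomial.eval_mul, Polynomial.eval_prod]
      have h0mem : 0 ∈ (Finset.range (N + 1)).erase b :=
        Finset.mem_erase.mpr ⟨Ne.symm hb0, Finset.mem_range.mpr (by omega)⟩
      rw [Finset.prod_eq_zero h0mem (by simp), zero_mul]
    · intro h
      exact absurd (Finset.mem_range.mpr (by omega)) h
  have hR : Polynomial.eval 1 (Polynomial.derivative
        (∑ n ∈ Finset.range (N + 2),
          Polynomial.C (qBinom q (N + 1) n * (-1) ^ n * q ^ n.choose 2) * Polynomial.X ^ n))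
      = ∑ n ∈ Finset.range (N + 2),
          qBinom q (N + 1) n * (-1) ^ n * q ^ n.choose 2 * n := by
    rw [map_sum, Polynomial.eval_finset_sum]
    refine Finset.sum_congr rfl fun n _ => ?_
    rw [Polynomial.derivative_C_mul, Polynomial.derivative_X_pow]
    simp
  rw [hL, hR] at hder
  have hsum : ∑ n ∈ Finset.range (N + 2),
        qBinom q (N + 1) n * (-1) ^ n * q ^ n.choose 2 * n
      = ∑ n ∈ Finset.Icc 1 (N + 1),
        qBinom q (N + 1) n * (-1) ^ n * q ^ n.choose 2 * n := by
    refine (Finset.sum_subset ?_ ?_).symm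
    · intro a ha
      simp only [Finset.mem_Icc] at ha
      exact Finset.mem_range.mpr (by omega)
    · intro a ha ha2
      have : a = 0 := by
        simp only [Finset.mem_range] at ha
        simp only [Finset.mem_Icc] at ha2
        omega
      subst this; simp
  rw [hsum] at hder
  have := congrArg Neg.neg hder
  rw [neg_neg, ← Finset.sum_neg_distrib] at this
  rw [this]
  refine Finset.sum_congr rfl fun n hn => ?_
  obtain ⟨m, rfl⟩ : ∃ m, n = m + 1 := ⟨n - 1, by
    have := (Finset.mem_Icc.mp hn).1; omega⟩
  simp only [Nat.add_sub_cancel, Nat.choose_two_right, pow_succ]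
  ring
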